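/- The limit of G_U(n)/n as n → ∞ equals (9 + 3√5)/2, where G_U(n) is the Frobenius number of the tail {U_n, U_{n+1}, …} of the upper Wythoff sequence U_n = ⌊nφ²⌋, φ = (1+√5)/2. -/

import Mathlib

noncomputable def phi : ℝ := (1 + Real.sqrt 5) / 2

/-- The upper Wythoff sequence. -/
noncomputable def uw (n : ℕ) : ℕ := ⌊(n : ℝ) * phi ^ 2⌋₊

lemma s5sq : Real.sqrt 5 ^ 2 = 5 := Real.sq_sqrt (by norm_num)
lemma s5lb : 2.236 < Real.sqrt 5 := by nlinarith [s5sq, Real.sqrt_nonneg 5]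
lemma s5ub : Real.sqrt 5 < 2.2361 := by nlinarith [s5sq, Real.sqrt_nonneg 5]
lemma phi_lb : 1.618 < phi := by unfold phi; linarith [s5lb]
lemma phi_ub : phi < 1.61806 := by unfold phi; linarith [s5ub]
lemma phi_pos : 0 < phi := by linarith [phi_lb]
lemma phi_sq : phi ^ 2 = phi + 1 := by
  unfold phi; field_simp; nlinarith [s5sq]

lemma uw_int (j : ℕ) : (uw j : ℤ) = j + ⌊(j : ℝ) * phi⌋ := by
  unfold uw
  rw [Int.natCast_floor_eq_floor (by positivity)]
  have h : (j : ℝ) * phi ^ 2 = j * phi + (j : ℕ) := by rw [phi_sq]; push_cast; ring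
  rw [h, Int.floor_add_natCast]
  ring

lemma uw_real (j : ℕ) : (uw j : ℝ) = j + j * phi - Int.fract ((j : ℝ) * phi) := by
  have := uw_int j
  have h2 : ((uw j : ℤ) : ℝ) = ((j : ℤ) : ℝ) + ((⌊(j : ℝ) * phi⌋ : ℤ) : ℝ) := by
    rw [this]; push_cast; ring
  push_cast at h2
  rw [h2, ← Int.self_sub_fract ((j:ℝ)*phi)]
  ring

lemma fract01 (x : ℝ) : 0 ≤ Int.fract x ∧ Int.fract x < 1 :=
  ⟨Int.fract_nonneg x, Int.fract_lt_one x⟩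

/-- key relation between consecutive uw and fractional parts -/
lemma uw_succ_real (c : ℕ) :
    (uw (c+1) : ℝ) - uw c
      = 1 + phi + Int.fract ((c : ℝ) * phi) - Int.fract (((c:ℕ)+1 : ℝ) * phi) := by
  have h1 := uw_real c
  have h2 := uw_real (c+1)
  push_cast at h2
  rw [h1, h2]
  ring

lemma uw_gap (c : ℕ) : uw c + 2 ≤ uw (c+1) ∧ uw (c+1) ≤ uw c + 3 := by
  have h := uw_succ_real c
  have a1 := (fract01 ((c : ℝ) * phi)).1
  have a2 := (fract01 ((c : ℝ) * phi)).2
  have b1 := (fract01 (((c:ℕ)+1 : ℝ) * phi)).1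
  have b2 := (fract01 (((c:ℕ)+1 : ℝ) * phi)).2
  have hl : (uw c : ℝ) + 1 < uw (c+1) := by nlinarith [phi_lb]
  have hr : (uw (c+1) : ℝ) < uw c + 4 := by nlinarith [phi_ub]
  have hl' : uw c + 1 < uw (c+1) := by exact_mod_cast hl
  have hr' : uw (c+1) < uw c + 4 := by exact_mod_cast hr
  omega

lemma uw_mono : StrictMono uw := by
  apply strictMono_nat_of_lt_succ
  intro c
  have := (uw_gap c).1
  omega

lemma uw_le (j : ℕ) : (uw j : ℝ) ≤ j * phi ^ 2 := by
  unfold uw; exact Nat.floor_le (by positivity)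

lemma uw_lt (j : ℕ) : j * phi ^ 2 - 1 < (uw j : ℝ) := by
  unfold uw; have := Nat.lt_floor_add_one ((j:ℝ) * phi ^ 2); linarith

lemma theta_lb : 0.09 < 5 * phi - 8 := by linarith [phi_lb]
lemma theta_ub : 5 * phi - 8 < 0.091 := by linarith [phi_ub]

/-- rotation hitting lemma -/
lemma hit (x a : ℝ) (ha : 0 ≤ a) (hb : a + (5 * phi - 8) ≤ 1) :
    ∃ s : ℕ, s ≤ 12 ∧ a ≤ Int.fract (x + s * (5 * phi - 8)) ∧
      Int.fract (x + s * (5 * phi - 8)) < a + (5 * phi - 8) := by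
  set θ := 5 * phi - 8 with hθdef
  have hθ : (0.09 : ℝ) < θ := theta_lb
  have hθ' : θ < 0.091 := theta_ub
  set d := Int.fract (a - x) with hd
  have hd0 : 0 ≤ d := Int.fract_nonneg _
  have hd1 : d < 1 := Int.fract_lt_one _
  refine ⟨⌈d / θ⌉₊, ?_, ?_, ?_⟩
  · rw [Nat.ceil_le]
    push_cast
    rw [div_le_iff₀ (by linarith)]
    nlinarith
  all_goals {
    have h1 : d ≤ (⌈d / θ⌉₊ : ℝ) * θ := by
      have := Nat.le_ceil (d / θ)
      calc d = d / θ * θ := by field_simp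
        _ ≤ (⌈d / θ⌉₊ : ℝ) * θ := by
          apply mul_le_mul_of_nonneg_right this (by linarith)
    have h2 : (⌈d / θ⌉₊ : ℝ) * θ < d + θ := by
      have h3 : (⌈d / θ⌉₊ : ℝ) < d / θ + 1 := Nat.ceil_lt_add_one (by positivity)
      have := mul_lt_mul_of_pos_right h3 (show (0:ℝ) < θ by linarith)
      calc (⌈d / θ⌉₊ : ℝ) * θ < (d / θ + 1) * θ := this
        _ = d + θ := by field_simp
    have key : x + ⌈d / θ⌉₊ * θ = (a + (⌈d / θ⌉₊ * θ - d)) + (-⌊a - x⌋ : ℤ) := by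
      have : d = a - x - ⌊a - x⌋ := by rw [hd, Int.fract]
      push_cast
      rw [this]; ring
    have hin : 0 ≤ a + ((⌈d / θ⌉₊ : ℝ) * θ - d) ∧ a + ((⌈d / θ⌉₊ : ℝ) * θ - d) < 1 :=
      ⟨by linarith, by linarith⟩
    rw [key, Int.fract_add_intCast, Int.fract_eq_self.mpr hin] <;> linarith
  }

lemma fract_shift (n s : ℕ) :
    Int.fract (((n + 5 * s : ℕ) : ℝ) * phi)
      = Int.fract (Int.fract ((n : ℝ) * phi) + s * (5 * phi - 8)) := by
  have h1 : ((n + 5 * s : ℕ) : ℝ) * phi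
      = (Int.fract ((n : ℝ) * phi) + s * (5 * phi - 8)) + (⌊(n:ℝ) * phi⌋ + 8 * s : ℤ) := by
    push_cast
    rw [Int.fract]
    ring
  rw [h1, Int.fract_add_intCast]

lemma find_idx (n : ℕ) (a : ℝ) (ha : 0 ≤ a) (hb : a + (5 * phi - 8) ≤ 1) :
    ∃ i : ℕ, n ≤ i ∧ i ≤ n + 60 ∧ a ≤ Int.fract ((i : ℝ) * phi) ∧
      Int.fract ((i : ℝ) * phi) < a + (5 * phi - 8) := by
  obtain ⟨s, hs, h1, h2⟩ := hit (Int.fract ((n : ℝ) * phi)) a ha hb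
  refine ⟨n + 5 * s, by omega, by omega, ?_, ?_⟩ <;>
    rw [fract_shift] <;> assumption

lemma sum3_eq (i j l m t : ℕ) (h : i + j + l = m)
    (hlt : (t : ℝ) - 1 < Int.fract ((i:ℝ)*phi) + Int.fract ((j:ℝ)*phi)
        + Int.fract ((l:ℝ)*phi) - Int.fract ((m:ℝ)*phi))
    (hgt : Int.fract ((i:ℝ)*phi) + Int.fract ((j:ℝ)*phi)
        + Int.fract ((l:ℝ)*phi) - Int.fract ((m:ℝ)*phi) < (t : ℝ) + 1) :
    uw i + uw j + uw l + t = uw m := by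
  have hm : (m : ℝ) = i + j + l := by exact_mod_cast congrArg (Nat.cast : ℕ → ℝ) h.symm
  have hmp : (m : ℝ) * phi = i * phi + j * phi + l * phi := by rw [hm]; ring
  have hE : ((uw m : ℤ) - uw i - uw j - uw l : ℝ)
      = Int.fract ((i:ℝ)*phi) + Int.fract ((j:ℝ)*phi)
        + Int.fract ((l:ℝ)*phi) - Int.fract ((m:ℝ)*phi) := by
    push_cast
    rw [uw_real, uw_real, uw_real, uw_real]
    linarith
  have h1 : (t : ℤ) - 1 < (uw m : ℤ) - uw i - uw j - uw l := by
    have : ((t : ℤ) - 1 : ℝ) < (((uw m : ℤ) - uw i - uw j - uw l : ℤ) : ℝ) := by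
      push_cast at hE ⊢; rw [hE]; push_cast at hlt; linarith
    exact_mod_cast this
  have h2 : ((uw m : ℤ) - uw i - uw j - uw l) < (t : ℤ) + 1 := by
    have : (((uw m : ℤ) - uw i - uw j - uw l : ℤ) : ℝ) < ((t : ℤ) + 1 : ℝ) := by
      push_cast at hE ⊢; rw [hE]; push_cast at hgt; linarith
    exact_mod_cast this
  omega

lemma sum2_bound (p q : ℕ) :
    uw p + uw q ≤ uw (p + q) ∧ uw (p + q) ≤ uw p + uw q + 1 := by
  have hmp : ((p + q : ℕ) : ℝ) * phi = p * phi + q * phi := by push_cast; ring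
  have hE : ((uw (p+q) : ℤ) - uw p - uw q : ℝ)
      = Int.fract ((p:ℝ)*phi) + Int.fract ((q:ℝ)*phi) - Int.fract (((p+q:ℕ):ℝ)*phi) := by
    push_cast
    rw [uw_real, uw_real, uw_real]
    push_cast
    linarith
  have a1 := (fract01 ((p:ℝ)*phi)); have a2 := (fract01 ((q:ℝ)*phi))
  have a3 := (fract01 (((p+q:ℕ):ℝ)*phi))
  push_cast at a3
  have h1 : (-1 : ℤ) < (uw (p+q) : ℤ) - uw p - uw q := by
    have : (-1 : ℝ) < (((uw (p+q) : ℤ) - uw p - uw q : ℤ) : ℝ) := by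
      push_cast at hE ⊢; rw [hE]; linarith [a1.1, a2.1, a3.2]
    exact_mod_cast this
  have h2 : (uw (p+q) : ℤ) - uw p - uw q < 2 := by
    have : (((uw (p+q) : ℤ) - uw p - uw q : ℤ) : ℝ) < (2:ℝ) := by
      push_cast at hE ⊢; rw [hE]; linarith [a1.2, a2.2, a3.1]
    exact_mod_cast this
  omega

def Sgen (n : ℕ) : Set ℕ := {x : ℕ | ∃ j, n ≤ j ∧ x = uw j}

lemma mem_S {n j : ℕ} (h : n ≤ j) : uw j ∈ Sgen n := ⟨j, h, rfl⟩

lemma three_sum_mem {n i j l : ℕ} (hi : n ≤ i) (hj : n ≤ j) (hl : n ≤ l) :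
    uw i + uw j + uw l ∈ AddSubmonoid.closure (Sgen n) :=
  add_mem (add_mem (AddSubmonoid.subset_closure (mem_S hi))
    (AddSubmonoid.subset_closure (mem_S hj))) (AddSubmonoid.subset_closure (mem_S hl))

lemma rep_of_big (n k : ℕ) (hk : uw (3*n+120) ≤ k) :
    k ∈ AddSubmonoid.closure (Sgen n) := by
  have hex : ∃ m, k ≤ uw m := ⟨k, uw_mono.le_apply⟩
  set m := Nat.find hex with hmdef
  have hm : k ≤ uw m := Nat.find_spec hex
  have hm120 : 3*n+120 ≤ m := by
    by_contra hcon
    push_neg at hcon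
    have : uw m < uw (3*n+120) ∨ uw m = uw (3*n+120) := by
      rcases lt_or_eq_of_le (uw_mono.le_iff_le.mpr (le_of_lt hcon)) with h | h
      · exact Or.inl h
      · exact Or.inr h
    have h1 : uw m ≤ uw (3*n+120) := uw_mono.le_iff_le.mpr (le_of_lt hcon)
    have h2 : uw (3*n+120) ≤ uw m := le_trans hk hm |>.trans (le_refl _) |>.trans (le_refl _)
    have : m = 3*n+120 := uw_mono.injective (le_antisymm h1 h2)
    omega
  have hmin : ∀ m'', m'' < m → uw m'' < k := by
    intro m'' hlt
    by_contra hcon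
    push_neg at hcon
    exact Nat.find_min hex hlt hcon
  clear_value m
  clear hmdef
  obtain ⟨m', rfl⟩ : ∃ m'', m = m'' + 1 := ⟨m - 1, by omega⟩
  have hlow : uw m' < k := hmin m' (by omega)
  have hgap := uw_gap m'
  have hcases : uw (m'+1) = k ∨ uw (m'+1) = k + 1 ∨ uw (m'+1) = k + 2 := by omega
  set β := Int.fract (((m'+1 : ℕ) : ℝ) * phi) with hβ
  push_cast at hβ
  have hβ01 := fract01 (((m'+1 : ℕ) : ℝ) * phi)
  rw [show Int.fract (((m'+1 : ℕ) : ℝ) * phi) = β from rfl] at hβ01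
  have hθu := theta_ub
  have hθl := theta_lb
  rcases hcases with h0 | h1 | h2
  · rw [← h0]
    exact AddSubmonoid.subset_closure (mem_S (by omega))
  · -- t = 1
    obtain ⟨i, hni, hi60, hxl, hxu⟩ := find_idx n (β/2 + 1/5)
      (by linarith [hβ01.1]) (by linarith [hβ01.2])
    obtain ⟨j, hnj, hj60, hyl, hyu⟩ := find_idx n (β/2 + 1/5)
      (by linarith [hβ01.1]) (by linarith [hβ01.2])
    set l := (m' + 1) - i - j with hl
    have hln : n ≤ l := by omega
    have hsum : i + j + l = m' + 1 := by omega
    have hz := fract01 ((l : ℝ) * phi)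
    have key := sum3_eq i j l (m'+1) 1 hsum
      (by push_cast; push_cast at hxl hyl; rw [← hβ]; linarith [hz.1])
      (by push_cast; push_cast at hxu hyu; rw [← hβ]; linarith [hz.2])
    have : uw i + uw j + uw l = k := by omega
    rw [← this]
    exact three_sum_mem hni hnj hln
  · -- t = 2
    have hgap3 : uw (m'+1) = uw m' + 3 := by omega
    have hrel := uw_succ_real m'
    have hx' := fract01 ((m' : ℝ) * phi)
    have hβlt : β < phi - 1 := by
      have h3 : (uw (m'+1) : ℝ) - uw m' = 3 := by
        rw [hgap3]; push_cast; ring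
      push_cast at hrel h3 ⊢
      rw [← hβ] at hrel
      linarith [hx'.2]

    obtain ⟨i, hni, hi60, hxl, hxu⟩ := find_idx n 0.85 (by norm_num) (by linarith)
    obtain ⟨j, hnj, hj60, hyl, hyu⟩ := find_idx n 0.85 (by norm_num) (by linarith)
    set l := (m' + 1) - i - j with hl
    have hln : n ≤ l := by omega
    have hsum : i + j + l = m' + 1 := by omega
    have hz := fract01 ((l : ℝ) * phi)
    have key := sum3_eq i j l (m'+1) 2 hsum
      (by push_cast; push_cast at hxl hyl; rw [← hβ]; linarith [hz.1, phi_ub])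
      (by push_cast; push_cast at hxu hyu; rw [← hβ]; linarith [hz.2, hβ01.1])
    have : uw i + uw j + uw l = k := by omega
    rw [← this]
    exact three_sum_mem hni hnj hln

lemma gap3_exists (c : ℕ) : uw (c+1) = uw c + 3 ∨ uw (c+2) = uw (c+1) + 3 := by
  by_contra hcon
  push_neg at hcon
  have g1 := uw_gap c
  have g2 := uw_gap (c+1)
  rw [show c+1+1 = c+2 by omega] at g2
  have e1 : uw (c+1) = uw c + 2 := by omega
  have e2 : uw (c+2) = uw (c+1) + 2 := by omega
  have r1 := uw_succ_real c
  have r2 := uw_succ_real (c+1)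
  have c1 : (uw (c+1) : ℝ) - uw c = 2 := by rw [e1]; push_cast; ring
  have c2 : (uw (c+2) : ℝ) - uw (c+1) = 2 := by
    rw [show c + 2 = (c+1)+1 from rfl, e2]; push_cast; ring
  rw [show c + 1 + 1 = c + 2 from rfl] at r2
  push_cast at r1 r2 c1 c2
  have f1 := fract01 ((c : ℝ) * phi)
  have f2 := fract01 (((c : ℝ) + 1 + 1) * phi)
  have hphi := phi_lb
  linarith [f1.1, f2.2]

lemma lower_witness (n : ℕ) (hn : 3 ≤ n) :
    ∃ N : ℕ, uw (3*n-5) ≤ N + 2 ∧ N ∉ AddSubmonoid.closure (Sgen n) := by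
  have hkey : ∃ m', 3*n-6 ≤ m' ∧ m' ≤ 3*n-5 ∧ uw (m'+1) = uw m' + 3 := by
    rcases gap3_exists (3*n-6) with h | h
    · exact ⟨3*n-6, by omega, by omega, h⟩
    · refine ⟨3*n-5, by omega, by omega, ?_⟩
      rw [show 3*n-5+1 = 3*n-6+2 by omega, show 3*n-5 = 3*n-6+1 by omega]
      exact h
  obtain ⟨m', hnm6, hm5, hgap3⟩ := hkey
  have hnm : n ≤ m' := by omega
  refine ⟨uw m' + 1, ?_, ?_⟩
  · have : uw (3*n-5) ≤ uw (m'+1) := uw_mono.monotone (by omega)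
    omega
  intro hmem
  obtain ⟨L, hLmem, hLsum⟩ := AddSubmonoid.exists_list_of_mem_closure hmem
  have helem : ∀ y ∈ L, uw n ≤ y ∧ ∃ j, n ≤ j ∧ y = uw j := by
    intro y hy
    obtain ⟨j, hj, rfl⟩ := hLmem y hy
    exact ⟨uw_mono.monotone hj, j, hj, rfl⟩
  match L, hLsum with
  | [], hLsum => simp at hLsum
  | [a], hLsum =>
    obtain ⟨_, j, hj, rfl⟩ := helem a (by simp)
    simp at hLsum
    rcases le_or_gt j m' with h | h
    · have := uw_mono.monotone h; omega
    · have := uw_mono.monotone (show m'+1 ≤ j by omega); omega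
  | [a, b], hLsum =>
    obtain ⟨_, p, hp, rfl⟩ := helem a (by simp)
    obtain ⟨_, q, hq, rfl⟩ := helem b (by simp)
    simp at hLsum
    have hs2 := sum2_bound p q
    rcases le_or_gt (p + q) m' with h | h
    · have := uw_mono.monotone h; omega
    · have := uw_mono.monotone (show m'+1 ≤ p + q by omega); omega
  | a :: b :: c :: rest, hLsum =>
    have ha := (helem a (by simp)).1
    have hb := (helem b (by simp)).1
    have hc := (helem c (by simp)).1
    have hrest : 0 ≤ rest.sum := Nat.zero_le _
    have hsum3 : 3 * uw n ≤ (a :: b :: c :: rest).sum := by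
      simp only [List.sum_cons]
      omega
    have hbig : uw (3*n-5) + 2 < 3 * uw n := by
      have h1 : (uw (3*n-5) : ℝ) ≤ (3*n-5 : ℕ) * phi ^ 2 := uw_le _
      have h2 : (n : ℝ) * phi ^ 2 - 1 < uw n := uw_lt n
      have hc5 : ((3*n-5 : ℕ) : ℝ) = 3 * (n:ℝ) - 5 := by
        push_cast [Nat.cast_sub (show 5 ≤ 3*n by omega)]; ring
      have hphisq : (2.6 : ℝ) < phi ^ 2 := by rw [phi_sq]; linarith [phi_lb]
      have : (uw (3*n-5) : ℝ) + 2 < 3 * uw n := by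
        rw [hc5] at h1
        nlinarith
      exact_mod_cast this
    have hle : uw m' + 1 ≤ uw (3*n-5) + 1 := by
      have := uw_mono.monotone hm5; omega
    omega

theorem frobenius_upper_wythoff_limit (G : ℕ → ℕ)
    (hG : ∀ n, 1 ≤ n → FrobeniusNumber (G n) {x : ℕ | ∃ j, n ≤ j ∧ x = uw j}) :
    Filter.Tendsto (fun n : ℕ => (G n : ℝ) / n) Filter.atTop
      (nhds ((9 + 3 * Real.sqrt 5) / 2)) := by
  have h3phi : (9 + 3 * Real.sqrt 5) / 2 = 3 * phi ^ 2 := by rw [phi_sq]; unfold phi; ring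
  rw [h3phi]
  have hbound : ∀ n : ℕ, 3 ≤ n →
      3*phi^2 - (5*phi^2+3) * (1/(n:ℝ)) ≤ (G n : ℝ)/n ∧
      (G n : ℝ)/n ≤ 3*phi^2 + 120*phi^2 * (1/(n:ℝ)) := by
    intro n hn
    have hn0 : (0:ℝ) < n := by positivity
    obtain ⟨hGmem, hGub⟩ := hG n (by omega)
    obtain ⟨N, hN2, hNmem⟩ := lower_witness n hn
    have hNG : N ≤ G n := hGub hNmem
    have hup : G n < uw (3*n+120) := by
      by_contra hcon
      push_neg at hcon
      exact hGmem (rep_of_big n (G n) hcon)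
    have hlowR : (3*(n:ℝ)-5) * phi^2 - 3 ≤ (G n : ℝ) := by
      have h1 : ((3*n-5 : ℕ) : ℝ) * phi ^ 2 - 1 < uw (3*n-5) := uw_lt _
      have hc5 : ((3*n-5 : ℕ) : ℝ) = 3 * (n:ℝ) - 5 := by
        push_cast [Nat.cast_sub (show 5 ≤ 3*n by omega)]; ring
      rw [hc5] at h1
      have h2 : (uw (3*n-5) : ℝ) ≤ (N : ℝ) + 2 := by exact_mod_cast hN2
      have h3 : (N : ℝ) ≤ G n := by exact_mod_cast hNG
      linarith
    have hupR : (G n : ℝ) ≤ (3*(n:ℝ)+120) * phi^2 := by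
      have h1 : (uw (3*n+120) : ℝ) ≤ ((3*n+120 : ℕ) : ℝ) * phi ^ 2 := uw_le _
      have h2 : (G n : ℝ) + 1 ≤ uw (3*n+120) := by exact_mod_cast hup
      push_cast at h1
      linarith
    constructor
    · have he : 3*phi^2 - (5*phi^2+3) * (1/(n:ℝ)) = ((3*(n:ℝ)-5) * phi^2 - 3)/n := by
        field_simp; ring
      rw [he]
      gcongr
    · have he : 3*phi^2 + 120*phi^2 * (1/(n:ℝ)) = ((3*(n:ℝ)+120) * phi^2)/n := by
        field_simp
      rw [he]
      gcongr
  have l0 : Filter.Tendsto (fun n : ℕ => (1:ℝ)/n) Filter.atTop (nhds 0) :=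
    tendsto_one_div_atTop_nhds_zero_nat
  have llow : Filter.Tendsto (fun n : ℕ => 3*phi^2 - (5*phi^2+3) * (1/(n:ℝ)))
      Filter.atTop (nhds (3*phi^2)) := by
    have h := Filter.Tendsto.const_mul (5*phi^2+3) l0
    have h2 := Filter.Tendsto.sub (tendsto_const_nhds (x := 3*phi^2) (f := Filter.atTop)) h
    simpa using h2
  have lup : Filter.Tendsto (fun n : ℕ => 3*phi^2 + 120*phi^2 * (1/(n:ℝ)))
      Filter.atTop (nhds (3*phi^2)) := by
    have h := Filter.Tendsto.const_mul (120*phi^2) l0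
    have h2 := Filter.Tendsto.add (tendsto_const_nhds (x := 3*phi^2) (f := Filter.atTop)) h
    simpa using h2
  exact tendsto_of_tendsto_of_tendsto_of_le_of_le' llow lup
    (Filter.eventually_atTop.2 ⟨3, fun n hn => (hbound n hn).1⟩)
    (Filter.eventually_atTop.2 ⟨3, fun n hn => (hbound n hn).2⟩)
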